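/- Let G be a finite group acting on a finite set X, with Z orbits. Consider the bipartite graph on X ⊔ G where x ∈ X is joined to g ∈ G iff x^g = x. Then the stationary distribution of the two-step random walk on X (from x choose a uniform neighbor g in G, then from g choose a uniform neighbor y in X) is π(x) = 1/(Z·|O_x|), where O_x is the orbit of x; in particular Σ_x π(x) = 1 follows from Burnside's lemma |{(x,g) : x^g = x}| = Z·|G|. -/
import Mathlib


open Finset

section Aux

set_option linter.unusedSectionVars false

variable {G : Type*} [Group G] [Fintype G] {X : Type*} [Fintype X] [DecidableEq X] [MulAction G X]

lemma aux_orbit_stab (x : X) :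
    (Nat.card (MulAction.orbit G x)) * Nat.card (MulAction.stabilizer G x) = Nat.card G := by
  simpa [Nat.card_prod] using Nat.card_congr (MulAction.orbitProdStabilizerEquivGroup G x)

lemma aux_orbit_pos (x : X) : 0 < Nat.card (MulAction.orbit G x) :=
  @Nat.card_pos _ ⟨⟨x, MulAction.mem_orbit_self x⟩⟩ _

lemma aux_stab_pos (x : X) : 0 < Nat.card (MulAction.stabilizer G x) := Nat.card_pos

lemma aux_sum_inv_orbit :
    ∑ x : X, ((Nat.card (MulAction.orbit G x) : ℝ))⁻¹ =
      Nat.card (Quotient (MulAction.orbitRel G X)) := by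
  classical
  rw [← Equiv.sum_comp (MulAction.selfEquivSigmaOrbits G X).symm, ← Finset.univ_sigma_univ,
    Finset.sum_sigma]
  have step : ∀ ω : MulAction.orbitRel.Quotient G X,
      ∑ b : MulAction.orbit G ω.out,
        ((Nat.card (MulAction.orbit G
          ((MulAction.selfEquivSigmaOrbits G X).symm ⟨ω, b⟩)) : ℝ))⁻¹ = 1 := by
    intro ω
    have he : ∀ b : MulAction.orbit G ω.out,
        MulAction.orbit G (((MulAction.selfEquivSigmaOrbits G X).symm ⟨ω, b⟩ : X)) =
          MulAction.orbit G ω.out := by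
      intro b
      exact MulAction.orbit_eq_iff.mpr b.2
    simp_rw [he]
    rw [Finset.sum_const, Finset.card_univ, nsmul_eq_mul, ← Nat.card_eq_fintype_card]
    exact mul_inv_cancel₀ (by exact_mod_cast (aux_orbit_pos (G := G) ω.out).ne')
  rw [Finset.sum_congr rfl fun ω _ => step ω]
  simp [Nat.card_eq_fintype_card]


end Aux

section Aux2
set_option linter.unusedSectionVars false
variable {G : Type*} [Group G] [Fintype G] {X : Type*} [Fintype X] [DecidableEq X] [MulAction G X]

lemma aux_filter_stab (y : X) :
    ((Finset.univ.filter (fun g : G => g • y = y)).card) = Nat.card (MulAction.stabilizer G y) := by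
  rw [Nat.card_eq_fintype_card]
  exact (Fintype.card_subtype (fun g : G => g • y = y)).symm

lemma aux_key (y : X) :
    ∑ x : X, ∑ g ∈ Finset.univ.filter (fun g : G => g • x = x ∧ g • y = y),
        (((Finset.univ.filter (fun z : X => g • z = z)).card : ℝ))⁻¹ =
      Nat.card (MulAction.stabilizer G y) := by
  classical
  simp_rw [Finset.sum_filter]
  rw [Finset.sum_comm]
  have hg : ∀ g : G, ∑ x : X,
      (if g • x = x ∧ g • y = y then
        (((Finset.univ.filter (fun z : X => g • z = z)).card : ℝ))⁻¹ else 0) =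
      if g • y = y then 1 else 0 := by
    intro g
    by_cases hy : g • y = y
    · simp only [hy, and_true, if_pos hy]
      rw [← Finset.sum_filter, Finset.sum_const, nsmul_eq_mul]
      have hpos : 0 < (Finset.univ.filter (fun z : X => g • z = z)).card :=
        Finset.card_pos.mpr ⟨y, by simp [hy]⟩
      exact mul_inv_cancel₀ (by exact_mod_cast hpos.ne')
    · simp [hy]
  rw [Finset.sum_congr rfl fun g _ => hg g, ← Finset.sum_filter, Finset.sum_const,
    aux_filter_stab y]
  simp

end Aux2

/-- The Burnside process kernel
`P(x,y) = (1/|G_x|) Σ_{g ∈ G_x ∩ G_y} 1/|X^g|`. -/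
noncomputable def burnsideKernel (G : Type*) [Group G] [Fintype G]
    {X : Type*} [Fintype X] [DecidableEq X] [MulAction G X] (x y : X) : ℝ :=
  (1 / (Nat.card (MulAction.stabilizer G x) : ℝ)) *
    ∑ g ∈ Finset.univ.filter (fun g : G => g • x = x ∧ g • y = y),
      1 / ((Finset.univ.filter (fun z : X => g • z = z)).card : ℝ)

/-- The distribution `π(x) = 1/(Z·|O_x|)` (with `Z` the number of orbits) is a probability
distribution and is stationary for the Burnside process; moreover Burnside's lemma
`|{(x,g) : x^g = x}| = Z·|G|` holds. -/
theorem stmt_19 (G : Type*) [Group G] [Fintype G]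
    (X : Type*) [Fintype X] [DecidableEq X] [Nonempty X] [MulAction G X] :
    (∑ x : X, 1 / ((Nat.card (Quotient (MulAction.orbitRel G X)) : ℝ) *
        (Nat.card (MulAction.orbit G x) : ℝ)) = 1) ∧
    (∀ y : X,
      ∑ x : X, (1 / ((Nat.card (Quotient (MulAction.orbitRel G X)) : ℝ) *
          (Nat.card (MulAction.orbit G x) : ℝ))) * burnsideKernel G x y =
        1 / ((Nat.card (Quotient (MulAction.orbitRel G X)) : ℝ) *
          (Nat.card (MulAction.orbit G y) : ℝ))) ∧
    Nat.card {xg : X × G // xg.2 • xg.1 = xg.1} =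
      Nat.card (Quotient (MulAction.orbitRel G X)) * Nat.card G := by
  classical
  haveI : Nonempty (Quotient (MulAction.orbitRel G X)) :=
    ⟨Quotient.mk _ (Classical.arbitrary X)⟩
  have hZpos : 0 < Nat.card (Quotient (MulAction.orbitRel G X)) := Nat.card_pos
  have hZ : ((Nat.card (Quotient (MulAction.orbitRel G X)) : ℝ)) ≠ 0 := by
    exact_mod_cast hZpos.ne'
  have hGpos : 0 < Nat.card G := Nat.card_pos
  have hGne : ((Nat.card G : ℝ)) ≠ 0 := by exact_mod_cast hGpos.ne'
  have hOne : ∀ x : X, ((Nat.card (MulAction.orbit G x) : ℝ)) ≠ 0 := fun x => by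
    exact_mod_cast (aux_orbit_pos (G := G) x).ne'
  have hSne : ∀ x : X, ((Nat.card (MulAction.stabilizer G x) : ℝ)) ≠ 0 := fun x => by
    exact_mod_cast (aux_stab_pos (G := G) (X := X) x).ne'
  have hOS : ∀ x : X, ((Nat.card (MulAction.orbit G x) : ℝ)) *
      ((Nat.card (MulAction.stabilizer G x) : ℝ)) = (Nat.card G : ℝ) := fun x => by
    exact_mod_cast aux_orbit_stab (G := G) x
  refine ⟨?_, ?_, ?_⟩
  · simp_rw [one_div, mul_inv]
    rw [← Finset.mul_sum, aux_sum_inv_orbit]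
    exact inv_mul_cancel₀ hZ
  · intro y
    have hstep : ∀ x : X,
        (1 / ((Nat.card (Quotient (MulAction.orbitRel G X)) : ℝ) *
            (Nat.card (MulAction.orbit G x) : ℝ))) * burnsideKernel G x y =
          ((Nat.card (Quotient (MulAction.orbitRel G X)) : ℝ) * (Nat.card G : ℝ))⁻¹ *
            ∑ g ∈ Finset.univ.filter (fun g : G => g • x = x ∧ g • y = y),
              (((Finset.univ.filter (fun z : X => g • z = z)).card : ℝ))⁻¹ := by
      intro x
      unfold burnsideKernel
      simp_rw [one_div]
      rw [← mul_assoc, mul_inv, mul_inv,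
        mul_assoc ((Nat.card (Quotient (MulAction.orbitRel G X)) : ℝ))⁻¹, ← mul_inv, hOS x]
    rw [Finset.sum_congr rfl fun x _ => hstep x, ← Finset.mul_sum, aux_key y]
    rw [one_div, ← hOS y, mul_inv, mul_inv, mul_inv, mul_assoc, mul_assoc,
      inv_mul_cancel₀ (hSne y), mul_one]
  · have e : {xg : X × G // xg.2 • xg.1 = xg.1} ≃ (Σ g : G, {x : X // g • x = x}) :=
      { toFun := fun p => ⟨p.1.2, p.1.1, p.2⟩
        invFun := fun s => ⟨(s.2.1, s.1), s.2.2⟩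
        left_inv := by rintro ⟨⟨x, g⟩, h⟩; rfl
        right_inv := by rintro ⟨g, x, h⟩; rfl }
    have hcard : ∀ g : G, Fintype.card {x : X // g • x = x} =
        Fintype.card (MulAction.fixedBy X g) := fun g =>
      Fintype.card_congr (Equiv.subtypeEquivRight (fun x => (MulAction.mem_fixedBy).symm))
    calc Nat.card {xg : X × G // xg.2 • xg.1 = xg.1}
        = ∑ g : G, Fintype.card {x : X // g • x = x} := by
          rw [Nat.card_congr e, Nat.card_eq_fintype_card, Fintype.card_sigma]
      _ = ∑ g : G, Fintype.card (MulAction.fixedBy X g) :=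
          Finset.sum_congr rfl fun g _ => hcard g
      _ = Fintype.card (MulAction.orbitRel.Quotient G X) * Fintype.card G :=
          MulAction.sum_card_fixedBy_eq_card_orbits_mul_card_group G X
      _ = Nat.card (MulAction.orbitRel.Quotient G X) * Nat.card G := by
          rw [Nat.card_eq_fintype_card, Nat.card_eq_fintype_card]
      _ = Nat.card (Quotient (MulAction.orbitRel G X)) * Nat.card G := rfl
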